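/- Consider the 2×2 matrix Â(θ) = [[â(θ), b̂(θ)],[1, f̂(θ)]] where â, b̂, f̂ are Z-transforms of finitely supported arrays on Z, with b̂ and f̂ having zero-sum arrays (b̄_0 = f̄_0 = 0), and f̂ real-valued. If the first-order Maclaurin coefficient of b̂ is nonzero (b̄_1 ≠ 0) and â(0) = 0 (no absolute feedback in A), then there exists θ₁ ≠ 0 arbitrarily close to 0 such that Â(θ₁) is not Hurwitz stable. -/

import Mathlib

lemma mem_spec_2x2 (A B F μ : ℂ) (h : (μ - A) * (μ - F) - B = 0) :
    μ ∈ spectrum ℂ !![A, B; 1, F] := by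
  rw [spectrum.mem_iff]
  intro hu
  rw [Matrix.isUnit_iff_isUnit_det, isUnit_iff_ne_zero] at hu
  apply hu
  rw [Matrix.det_fin_two]
  simp [Matrix.algebraMap_eq_diagonal, Matrix.diagonal_apply]
  linear_combination h

lemma exists_sqrt_c (z : ℂ) :
    ∃ s : ℂ, s^2 = z ∧ s.re = Real.sqrt ((‖z‖ + z.re)/2) := by
  have h1 : 0 ≤ (‖z‖ + z.re)/2 := by
    have := abs_le.mp (Complex.abs_re_le_norm z)
    linarith [this.1]
  have h2 : 0 ≤ (‖z‖ - z.re)/2 := by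
    have := abs_le.mp (Complex.abs_re_le_norm z)
    linarith [this.2]
  set x := Real.sqrt ((‖z‖ + z.re)/2) with hx
  set y0 := Real.sqrt ((‖z‖ - z.re)/2) with hy0
  have hxy : x * y0 = |z.im| / 2 := by
    rw [hx, hy0, ← Real.sqrt_mul h1]
    have h4 : (‖z‖ + z.re)/2 * ((‖z‖ - z.re)/2) = (z.im/2)^2 := by
      have h3 : ‖z‖ ^ 2 = z.re^2 + z.im^2 := by
        rw [Complex.sq_norm, Complex.normSq_apply]; ring
      nlinarith [h3]
    rw [h4, Real.sqrt_sq_eq_abs, abs_div]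
    simp
  have hx2 : x^2 = (‖z‖ + z.re)/2 := Real.sq_sqrt h1
  have hy2 : y0^2 = (‖z‖ - z.re)/2 := Real.sq_sqrt h2
  refine ⟨⟨x, if 0 ≤ z.im then y0 else -y0⟩, ?_, rfl⟩
  apply Complex.ext
  · simp only [pow_two, Complex.mul_re]
    split_ifs <;> nlinarith [hx2, hy2]
  · simp only [pow_two, Complex.mul_im]
    split_ifs with h
    · have : |z.im| = z.im := abs_of_nonneg h
      nlinarith [hxy]
    · have : |z.im| = -z.im := abs_of_neg (not_le.mp h)
      nlinarith [hxy]

lemma sum_est (g : ℤ → ℝ) (S : Finset ℤ) (hg : ∑ k ∈ S, g k = 0) (θ : ℝ)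
    (hθ : ∀ k ∈ S, |θ * (k:ℝ)| ≤ 1) :
    ‖((∑ k ∈ S, (g k : ℂ) * Complex.exp (-Complex.I * θ * k))
      + Complex.I * θ * ((∑ k ∈ S, (k : ℝ) * g k : ℝ) : ℂ))‖ ≤ θ^2 * ∑ k ∈ S, |g k| * (k:ℝ)^2 := by
  have h0 : (∑ k ∈ S, (g k : ℂ)) = 0 := by norm_cast
  have e1 : ∑ k ∈ S, (g k:ℂ) * (Complex.exp (-Complex.I * θ * k) - 1 - (-Complex.I * θ * k))
      = (∑ k ∈ S, (g k:ℂ) * Complex.exp (-Complex.I * θ * k)) - (∑ k ∈ S, (g k:ℂ))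
        - (-Complex.I * θ * ((∑ k ∈ S, (k : ℝ) * g k : ℝ) : ℂ)) := by
    push_cast
    rw [Finset.mul_sum, ← Finset.sum_sub_distrib, ← Finset.sum_sub_distrib]
    apply Finset.sum_congr rfl; intros; ring
  have key : (∑ k ∈ S, (g k : ℂ) * Complex.exp (-Complex.I * θ * k))
      + Complex.I * θ * ((∑ k ∈ S, (k : ℝ) * g k : ℝ) : ℂ)
      = ∑ k ∈ S, (g k : ℂ) * (Complex.exp (-Complex.I * θ * k) - 1 - (-Complex.I * θ * k)) := by
    rw [e1, h0]; ring
  rw [key]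
  calc ‖(∑ k ∈ S, (g k : ℂ) * (Complex.exp (-Complex.I * θ * k) - 1 - (-Complex.I * θ * k)))‖
      ≤ ∑ k ∈ S, ‖((g k : ℂ) * (Complex.exp (-Complex.I * θ * k) - 1 - (-Complex.I * θ * k)))‖ :=
        norm_sum_le _ _
    _ ≤ ∑ k ∈ S, θ^2 * (|g k| * (k:ℝ)^2) := by
        apply Finset.sum_le_sum
        intro k hk
        rw [norm_mul, Complex.norm_real, Real.norm_eq_abs]
        have habs : ‖(-Complex.I * θ * k)‖ = |θ * (k:ℝ)| := by
          simp [abs_mul]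
        have h1 : ‖(Complex.exp (-Complex.I * θ * k) - 1 - (-Complex.I * θ * k))‖
            ≤ ‖(-Complex.I * θ * k)‖ ^ 2 :=
          Complex.norm_exp_sub_one_sub_id_le (by rw [habs]; exact hθ k hk)
        rw [habs] at h1
        have h5 : |θ * (k:ℝ)|^2 = θ^2 * (k:ℝ)^2 := by rw [_root_.sq_abs]; ring
        rw [h5] at h1
        calc |g k| * ‖(Complex.exp (-Complex.I * θ * k) - 1 - (-Complex.I * θ * k))‖
            ≤ |g k| * (θ^2 * (k:ℝ)^2) := mul_le_mul_of_nonneg_left h1 (abs_nonneg _)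
          _ = θ^2 * (|g k| * (k:ℝ)^2) := by ring
    _ = θ^2 * ∑ k ∈ S, |g k| * (k:ℝ)^2 := by rw [Finset.mul_sum]

theorem stmt_11 (a b f : ℤ → ℝ)
    (ha : (Function.support a).Finite) (hb : (Function.support b).Finite)
    (hf : (Function.support f).Finite)
    (hbsum : ∑ᶠ k : ℤ, b k = 0) (hfsum : ∑ᶠ k : ℤ, f k = 0)
    (hfreal : ∀ θ : ℝ,
      (∑ᶠ k : ℤ, (f k : ℂ) * Complex.exp (-Complex.I * (θ : ℂ) * (k : ℂ))).im = 0)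
    (hb1 : ∑ᶠ k : ℤ, (k : ℝ) * b k ≠ 0)
    (ha0 : ∑ᶠ k : ℤ, a k = 0) :
    ∀ ε : ℝ, 0 < ε → ∃ θ : ℝ, θ ≠ 0 ∧ |θ| < ε ∧
      ∃ μ ∈ spectrum ℂ
        (!![∑ᶠ k : ℤ, (a k : ℂ) * Complex.exp (-Complex.I * (θ : ℂ) * (k : ℂ)),
            ∑ᶠ k : ℤ, (b k : ℂ) * Complex.exp (-Complex.I * (θ : ℂ) * (k : ℂ));
            1,
            ∑ᶠ k : ℤ, (f k : ℂ) * Complex.exp (-Complex.I * (θ : ℂ) * (k : ℂ))]),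
        0 ≤ μ.re := by
  classical
  intro ε hε
  have absSub : ∀ x y : ℂ, ‖(x - y)‖ ≤ ‖x‖ + ‖y‖ := by
    intro x y
    simpa using norm_sub_le x y
  obtain ⟨S, hS⟩ : ∃ S : Finset ℤ, S = ha.toFinset ∪ hb.toFinset ∪ hf.toFinset := ⟨_, rfl⟩
  have hsa : Function.support a ⊆ ↑S := by
    intro k hk
    simp only [hS, Finset.coe_union, Set.Finite.coe_toFinset]
    exact Or.inl (Or.inl hk)
  have hsb : Function.support b ⊆ ↑S := by
    intro k hk
    simp only [hS, Finset.coe_union, Set.Finite.coe_toFinset]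
    exact Or.inl (Or.inr hk)
  have hsf : Function.support f ⊆ ↑S := by
    intro k hk
    simp only [hS, Finset.coe_union, Set.Finite.coe_toFinset]
    exact Or.inr hk
  have conv : ∀ (g : ℤ → ℝ), Function.support g ⊆ ↑S → ∀ θ : ℝ,
      (∑ᶠ k : ℤ, (g k : ℂ) * Complex.exp (-Complex.I * (θ:ℂ) * (k:ℂ)))
        = ∑ k ∈ S, (g k : ℂ) * Complex.exp (-Complex.I * (θ:ℂ) * (k:ℂ)) := by
    intro g hg θ
    apply finsum_eq_sum_of_support_subset
    refine Set.Subset.trans ?_ hg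
    intro k hk
    simp only [Function.mem_support, ne_eq] at hk ⊢
    intro h0
    exact hk (by simp [h0])
  have convR : ∀ (g : ℤ → ℝ), Function.support g ⊆ ↑S →
      (∑ᶠ k : ℤ, g k) = ∑ k ∈ S, g k := fun g hg => finsum_eq_sum_of_support_subset _ hg
  have convK : ∀ (g : ℤ → ℝ), Function.support g ⊆ ↑S →
      (∑ᶠ k : ℤ, (k:ℝ) * g k) = ∑ k ∈ S, (k:ℝ) * g k := by
    intro g hg
    apply finsum_eq_sum_of_support_subset
    refine Set.Subset.trans ?_ hg
    intro k hk
    simp only [Function.mem_support, ne_eq] at hk ⊢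
    intro h0
    exact hk (by simp [h0])
  obtain ⟨a1, ha1⟩ : ∃ x : ℝ, x = ∑ k ∈ S, (k:ℝ) * a k := ⟨_, rfl⟩
  obtain ⟨b1, hb1'⟩ : ∃ x : ℝ, x = ∑ k ∈ S, (k:ℝ) * b k := ⟨_, rfl⟩
  obtain ⟨Ca, hCa'⟩ : ∃ x : ℝ, x = ∑ k ∈ S, |a k| * (k:ℝ)^2 := ⟨_, rfl⟩
  obtain ⟨Cb, hCb'⟩ : ∃ x : ℝ, x = ∑ k ∈ S, |b k| * (k:ℝ)^2 := ⟨_, rfl⟩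
  obtain ⟨Cf, hCf'⟩ : ∃ x : ℝ, x = ∑ k ∈ S, |f k| * (k:ℝ)^2 := ⟨_, rfl⟩
  have hb1ne : b1 ≠ 0 := by rw [hb1', ← convK b hsb]; exact hb1
  have hb1pos : 0 < |b1| := abs_pos.mpr hb1ne
  have hCa0 : 0 ≤ Ca := hCa' ▸ Finset.sum_nonneg fun k _ => by positivity
  have hCb0 : 0 ≤ Cb := hCb' ▸ Finset.sum_nonneg fun k _ => by positivity
  have hCf0 : 0 ≤ Cf := hCf' ▸ Finset.sum_nonneg fun k _ => by positivity
  obtain ⟨C, hC'⟩ : ∃ x : ℝ, x = 1 + Ca + Cf + |a1| := ⟨_, rfl⟩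
  have hC1 : 1 ≤ C := by rw [hC']; have := abs_nonneg a1; linarith
  have hCpos : 0 < C := lt_of_lt_of_le one_pos hC1
  obtain ⟨N, hN'⟩ : ∃ x : ℝ, x = 1 + ∑ k ∈ S, |(k:ℝ)| := ⟨_, rfl⟩
  have hN1 : 1 ≤ N := by
    rw [hN']
    have : 0 ≤ ∑ k ∈ S, |(k:ℝ)| := Finset.sum_nonneg fun k _ => abs_nonneg _
    linarith
  have hNpos : 0 < N := lt_of_lt_of_le one_pos hN1
  have hkN : ∀ k ∈ S, |(k:ℝ)| ≤ N := by
    intro k hk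
    rw [hN']
    have := Finset.single_le_sum (f := fun k : ℤ => |(k:ℝ)|) (fun k _ => abs_nonneg _) hk
    linarith
  obtain ⟨θ, hθ'⟩ : ∃ x : ℝ,
      x = min (ε/2) (min (1/N) (min 1 (|b1| / (8*(C^2+Cb) + 8)))) := ⟨_, rfl⟩
  have hθpos : 0 < θ := by
    rw [hθ']
    apply lt_min (by positivity)
    apply lt_min (by positivity)
    exact lt_min one_pos (by positivity)
  have hθε : θ ≤ ε/2 := hθ' ▸ min_le_left _ _
  have hθN : θ ≤ 1/N := hθ' ▸ le_trans (min_le_right _ _) (min_le_left _ _)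
  have hθ1 : θ ≤ 1 :=
    hθ' ▸ le_trans (min_le_right _ _) (le_trans (min_le_right _ _) (min_le_left _ _))
  have hθb : θ ≤ |b1| / (8*(C^2+Cb) + 8) :=
    hθ' ▸ le_trans (min_le_right _ _) (le_trans (min_le_right _ _) (min_le_right _ _))
  have hθsq : θ^2 ≤ θ := by
    calc θ^2 = θ*θ := sq θ
      _ ≤ 1*θ := mul_le_mul_of_nonneg_right hθ1 (le_of_lt hθpos)
      _ = θ := one_mul θ
  refine ⟨θ, ne_of_gt hθpos, by rw [abs_of_pos hθpos]; linarith only [hθε, hε], ?_⟩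
  rw [conv a hsa θ, conv b hsb θ, conv f hsf θ]
  obtain ⟨A, hA'⟩ : ∃ x : ℂ,
      x = ∑ k ∈ S, (a k : ℂ) * Complex.exp (-Complex.I * (θ:ℂ) * (k:ℂ)) := ⟨_, rfl⟩
  obtain ⟨B, hB'⟩ : ∃ x : ℂ,
      x = ∑ k ∈ S, (b k : ℂ) * Complex.exp (-Complex.I * (θ:ℂ) * (k:ℂ)) := ⟨_, rfl⟩
  obtain ⟨F, hF'⟩ : ∃ x : ℂ,
      x = ∑ k ∈ S, (f k : ℂ) * Complex.exp (-Complex.I * (θ:ℂ) * (k:ℂ)) := ⟨_, rfl⟩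
  rw [← hA', ← hB', ← hF']
  have hθk : ∀ k ∈ S, |θ * (k:ℝ)| ≤ 1 := by
    intro k hk
    rw [abs_mul, abs_of_pos hθpos]
    calc θ * |(k:ℝ)| ≤ θ * N := mul_le_mul_of_nonneg_left (hkN k hk) (le_of_lt hθpos)
      _ ≤ (1/N) * N := mul_le_mul_of_nonneg_right hθN (le_of_lt hNpos)
      _ = 1 := by field_simp
  have hAe : ‖(A + Complex.I * θ * (a1:ℂ))‖ ≤ Ca * θ^2 := by
    have h := sum_est a S (by rw [← convR a hsa]; exact ha0) θ hθk
    rw [← ha1, ← hCa', ← hA'] at h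
    linarith only [h]
  have hBe : ‖(B + Complex.I * θ * (b1:ℂ))‖ ≤ Cb * θ^2 := by
    have h := sum_est b S (by rw [← convR b hsb]; exact hbsum) θ hθk
    rw [← hb1', ← hCb', ← hB'] at h
    linarith only [h]
  have hFe : ‖(F + Complex.I * θ * ((∑ k ∈ S, (k:ℝ) * f k : ℝ):ℂ))‖ ≤ Cf * θ^2 := by
    have h := sum_est f S (by rw [← convR f hsf]; exact hfsum) θ hθk
    rw [← hCf', ← hF'] at h
    linarith only [h]
  have hFim : F.im = 0 := by
    have h := hfreal θ
    rw [conv f hsf θ, ← hF'] at h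
    exact h
  have hAre : |A.re| ≤ Ca * θ^2 := by
    have h : (A + Complex.I * θ * (a1:ℂ)).re = A.re := by simp
    rw [← h]
    exact le_trans (Complex.abs_re_le_norm _) hAe
  have hBre : |B.re| ≤ Cb * θ^2 := by
    have h : (B + Complex.I * θ * (b1:ℂ)).re = B.re := by simp
    rw [← h]
    exact le_trans (Complex.abs_re_le_norm _) hBe
  have hBim : |B.im + θ * b1| ≤ Cb * θ^2 := by
    have h : (B + Complex.I * θ * (b1:ℂ)).im = B.im + θ * b1 := by simp
    rw [← h]
    exact le_trans (Complex.abs_im_le_norm _) hBe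
  have hFre : |F.re| ≤ Cf * θ^2 := by
    have h : (F + Complex.I * θ * ((∑ k ∈ S, (k:ℝ) * f k : ℝ):ℂ)).re = F.re := by simp
    rw [← h]
    exact le_trans (Complex.abs_re_le_norm _) hFe
  have hFabs : ‖F‖ ≤ Cf * θ^2 := by
    have h := Complex.norm_le_abs_re_add_abs_im F
    rw [hFim] at h
    simp only [abs_zero, add_zero] at h
    exact le_trans h hFre
  have hAabs : ‖A‖ ≤ (Ca + |a1|) * θ := by
    have h1 : ‖A‖ ≤ ‖(A + Complex.I * θ * (a1:ℂ))‖
        + ‖(Complex.I * θ * (a1:ℂ))‖ := by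
      calc ‖A‖
          = ‖((A + Complex.I * θ * (a1:ℂ)) - Complex.I * θ * (a1:ℂ))‖ := by
            congr 1; ring
        _ ≤ _ := absSub _ _
    have h2 : ‖(Complex.I * θ * (a1:ℂ))‖ = |θ| * |a1| := by simp [map_mul]
    rw [h2, abs_of_pos hθpos] at h1
    have h4 : Ca * θ^2 ≤ Ca * θ := mul_le_mul_of_nonneg_left hθsq hCa0
    linarith only [h1, h4, hAe]
  obtain ⟨m', hm'⟩ : ∃ x : ℂ, x = (F - A)/2 := ⟨_, rfl⟩
  have hm'abs : ‖m'‖ ≤ C * θ := by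
    rw [hm', norm_div, Complex.norm_two]
    have h1 : ‖(F - A)‖ ≤ ‖F‖ + ‖A‖ := absSub _ _
    have h2 : Cf * θ^2 ≤ Cf * θ := mul_le_mul_of_nonneg_left hθsq hCf0
    rw [hC']
    linarith only [h1, h2, hFabs, hAabs, le_of_lt hθpos,
      mul_nonneg hCa0 (le_of_lt hθpos), mul_nonneg hCf0 (le_of_lt hθpos),
      mul_nonneg (abs_nonneg a1) (le_of_lt hθpos)]
  obtain ⟨D, hD'⟩ : ∃ x : ℂ, x = m'^2 + B := ⟨_, rfl⟩
  have hm2abs : ‖(m'^2)‖ ≤ C^2 * θ^2 := by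
    rw [norm_pow]
    calc ‖m'‖ ^ 2 ≤ (C*θ)^2 :=
          pow_le_pow_left₀ (norm_nonneg _) hm'abs 2
      _ = C^2 * θ^2 := by ring
  have hDre : -(C^2 + Cb) * θ^2 ≤ D.re := by
    have h1 : |(m'^2).re| ≤ C^2 * θ^2 := le_trans (Complex.abs_re_le_norm _) hm2abs
    have h2 := abs_le.mp h1
    have h3 := abs_le.mp hBre
    rw [hD', Complex.add_re]
    linarith [h2.1, h3.1]
  have hDim : θ * |b1| - 2 * ((C^2 + Cb) * θ^2) ≤ |D.im| := by
    have h1 : |(m'^2).im| ≤ C^2 * θ^2 := le_trans (Complex.abs_im_le_norm _) hm2abs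
    have h6 : |D.im + θ * b1| ≤ (C^2 + Cb) * θ^2 := by
      have he : D.im + θ * b1 = (m'^2).im + (B.im + θ * b1) := by
        rw [hD', Complex.add_im]; ring
      rw [he]
      calc |(m'^2).im + (B.im + θ * b1)| ≤ |(m'^2).im| + |B.im + θ * b1| := abs_add_le _ _
        _ ≤ C^2 * θ^2 + Cb * θ^2 := add_le_add h1 hBim
        _ = (C^2 + Cb) * θ^2 := by ring
    have h4 : |θ * b1| = θ * |b1| := by rw [abs_mul, abs_of_pos hθpos]
    have h5 : |θ * b1| ≤ |D.im + θ * b1| + |D.im| := by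
      have h7 := abs_add_le (D.im + θ * b1) (-D.im)
      rw [abs_neg] at h7
      have h8 : D.im + θ * b1 + -D.im = θ * b1 := by ring
      rw [h8] at h7
      exact h7
    rw [h4] at h5
    linarith only [h5, h6, mul_nonneg (add_nonneg (sq_nonneg C) hCb0) (sq_nonneg θ)]
  have hsmall : (C^2 + Cb) * θ^2 ≤ θ * |b1| / 8 := by
    have hpos : (0:ℝ) < 8*(C^2+Cb) + 8 := by positivity
    have h1 : (8*(C^2+Cb) + 8) * θ ≤ |b1| := by
      have := mul_le_mul_of_nonneg_left hθb (le_of_lt hpos)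
      rw [mul_div_cancel₀ _ (ne_of_gt hpos)] at this
      exact this
    linarith only [mul_le_mul_of_nonneg_left h1 (le_of_lt hθpos), sq_nonneg θ]
  have hkey1 : θ * |b1| / 8 ≤ (‖D‖ + D.re)/2 := by
    have h1 : |D.im| ≤ ‖D‖ := Complex.abs_im_le_norm D
    linarith only [h1, hDim, hDre, hsmall, mul_nonneg (le_of_lt hθpos) (le_of_lt hb1pos)]
  have hkey2 : (C * θ^2)^2 ≤ θ * |b1| / 8 := by
    have h0 : θ^2 ≤ 1 := le_trans hθsq hθ1
    have h1 : θ^4 ≤ θ^2 := by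
      calc θ^4 = θ^2 * θ^2 := by ring
        _ ≤ 1 * θ^2 := mul_le_mul_of_nonneg_right h0 (sq_nonneg θ)
        _ = θ^2 := one_mul _
    have h2 : C^2 * θ^4 ≤ C^2 * θ^2 := mul_le_mul_of_nonneg_left h1 (sq_nonneg C)
    linarith only [h2, hsmall, mul_nonneg hCb0 (sq_nonneg θ)]
  obtain ⟨s, hs2, hsre⟩ := exists_sqrt_c D
  have hsre' : C * θ^2 ≤ s.re := by
    rw [hsre]
    calc C * θ^2 = Real.sqrt ((C * θ^2)^2) := (Real.sqrt_sq (by positivity)).symm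
      _ ≤ Real.sqrt ((‖D‖ + D.re)/2) :=
          Real.sqrt_le_sqrt (le_trans hkey2 hkey1)
  refine ⟨(F + A)/2 + s, mem_spec_2x2 A B F _ ?_, ?_⟩
  · have h : s^2 = ((F - A)/2)^2 + B := by rw [hs2, hD', hm']
    linear_combination h
  · have hre : ((F + A)/2 + s).re = (F.re + A.re)/2 + s.re := by
      simp [Complex.add_re, Complex.div_ofNat_re]
    rw [hre]
    have h1 := abs_le.mp hFre
    have h2 := abs_le.mp hAre
    rw [hC'] at hsre'
    linarith only [h1.1, h2.1, hsre', sq_nonneg θ,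
      mul_nonneg hCa0 (sq_nonneg θ), mul_nonneg hCf0 (sq_nonneg θ),
      mul_nonneg (abs_nonneg a1) (sq_nonneg θ)]
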